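/- In the algorithm AbstractFlow, no residual s_i-to-t_j path with i > j exists with respect to the initial preprocessed capacities c_0, nor with respect to any residual capacities c_{k,l} with k <= l arising during the algorithm. -/

import Mathlib

open Finset

variable {V D F : Type}

/-- `p` is a path of darts from `u` to `v`. -/
def IsPathFrom (head tail : D → V) : V → V → List D → Prop
  | u, v, [] => u = v
  | u, v, d :: p => tail d = u ∧ IsPathFrom head tail (head d) v p

/-- The vertices visited by a path starting at `u`. -/
def pathVertices (head : D → V) (u : V) (p : List D) : List V := u :: p.map head

/-- A path (or cycle) is residual iff every dart has strictly positive (residual) capacity. -/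
def IsResidual (c : D → ℝ) (p : List D) : Prop := ∀ d ∈ p, 0 < c d

/-- Net flow into a vertex: sum of flow over darts whose head is `v`. -/
def netInto [Fintype D] [DecidableEq V] (head : D → V) (f : D → ℝ) (v : V) : ℝ :=
  ∑ d ∈ Finset.univ.filter (fun d => head d = v), f d

/-- `f` is a flow w.r.t. capacities `c`: antisymmetric, capacity-respecting,
balanced at every vertex other than `s` and `t`. -/
def IsFlow [Fintype D] [DecidableEq V] (head tail : D → V) (rev : D → D)
    (c f : D → ℝ) (s t : V) : Prop :=
  (∀ d, f (rev d) = - f d) ∧ (∀ d, f d ≤ c d) ∧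
  ∀ v, v ≠ s → v ≠ t → netInto head f v = 0

/-- The value of a flow: net flow entering the sink `t`. -/
def flowValue [Fintype D] [DecidableEq V] (head : D → V) (f : D → ℝ) (t : V) : ℝ :=
  netInto head f t

/-- A leftmost maximum st-flow: a maximum flow whose residual capacities render
every clockwise cycle non-residual. -/
def IsLeftmostMaxFlow [Fintype D] [DecidableEq V]
    (head tail : D → V) (rev : D → D) (IsClockwiseCycle : List D → Prop)
    (c f : D → ℝ) (s t : V) : Prop :=
  IsFlow head tail rev c f s t ∧
  (∀ f', IsFlow head tail rev c f' s t → flowValue head f' t ≤ flowValue head f t) ∧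
  ∀ p, IsClockwiseCycle p → ¬ IsResidual (fun d => c d - f d) p

/-- The data of a run of the algorithm AbstractFlow on terminals
`s 1, t 1, ..., s m, t m` (in clockwise boundary order):
`c0` are the preprocessed capacities (all s_j-to-t_i residual paths for `i < j` and
all clockwise cycles saturated); then for `j = 1..m` and `i = j` down to `1`,
`prev i j` are the residual capacities at the start of iteration `(i,j)`,
`fl i j` is the leftmost maximum `s i`-to-`t j` flow w.r.t. `prev i j`, and
`cap i j` the resulting residual capacities. -/
def AbstractFlowRun [Fintype D] [DecidableEq V]
    (head tail : D → V) (rev : D → D) (IsClockwiseCycle : List D → Prop)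
    (m : ℕ) (s t : ℕ → V) (c0 : D → ℝ) (prev cap fl : ℕ → ℕ → D → ℝ) : Prop :=
  -- preprocessing
  (∀ i j, 1 ≤ i → i < j → j ≤ m →
    ∀ p, IsPathFrom head tail (s j) (t i) p → ¬ IsResidual c0 p) ∧
  (∀ p, IsClockwiseCycle p → ¬ IsResidual c0 p) ∧
  -- the iteration order of the double loop
  (prev 1 1 = c0) ∧
  (∀ j, 1 < j → j ≤ m → prev j j = cap 1 (j - 1)) ∧
  (∀ i j, 1 ≤ i → i < j → j ≤ m → prev i j = cap (i + 1) j) ∧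
  -- each iteration augments a leftmost maximum flow
  (∀ i j, 1 ≤ i → i ≤ j → j ≤ m →
    IsLeftmostMaxFlow head tail rev IsClockwiseCycle (prev i j) (fl i j) (s i) (t j) ∧
    ∀ d, cap i j d = prev i j d - fl i j d)

set_option linter.unusedSectionVars false
set_option linter.unusedVariables false
set_option maxHeartbeats 1000000

section AuxPath

variable {head tail : D → V}

lemma isPathFrom_append {u v w : V} {p q : List D}
    (hp : IsPathFrom head tail u v p) (hq : IsPathFrom head tail v w q) :
    IsPathFrom head tail u w (p ++ q) := by
  induction p generalizing u with
  | nil =>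
      have h : u = v := hp
      subst h; simpa using hq
  | cons d p ih =>
      obtain ⟨h1, h2⟩ := hp
      exact ⟨h1, ih h2⟩

lemma isResidual_append {c : D → ℝ} {p q : List D}
    (hp : IsResidual c p) (hq : IsResidual c q) : IsResidual c (p ++ q) := by
  intro d hd
  rcases List.mem_append.1 hd with h | h
  · exact hp d h
  · exact hq d h

/-- Reachability along darts of strictly positive flow. -/
def FlowReach (head tail : D → V) (f : D → ℝ) : V → V → Prop :=
  Relation.ReflTransGen (fun a b => ∃ d, 0 < f d ∧ tail d = a ∧ head d = b)

lemma flowReach_walk {f : D → ℝ} {a b : V} (h : FlowReach head tail f a b) :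
    ∃ p, IsPathFrom head tail a b p ∧ ∀ d ∈ p, 0 < f d := by
  induction h using Relation.ReflTransGen.head_induction_on with
  | refl => exact ⟨[], rfl, by simp⟩
  | head hab _ ih =>
      obtain ⟨d, hd, hta, hhb⟩ := hab
      obtain ⟨p, hp, hres⟩ := ih
      refine ⟨d :: p, ⟨hta, by rwa [hhb]⟩, ?_⟩
      intro e he
      rcases List.mem_cons.1 he with rfl | he
      · exact hd
      · exact hres e he

end AuxPath

section AuxFlow

variable [Fintype V] [Fintype D] [DecidableEq V] [DecidableEq D]
variable {head tail : D → V} {rev : D → D}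

omit [Fintype V] [Fintype D] [DecidableEq V] [DecidableEq D] in
lemma tail_rev (hrev : ∀ d, rev (rev d) = d) (hheadrev : ∀ d, head (rev d) = tail d)
    (d : D) : tail (rev d) = head d := by
  conv_rhs => rw [← hrev d, hheadrev]

lemma sum_netInto_eq (hrev : ∀ d, rev (rev d) = d) (hheadrev : ∀ d, head (rev d) = tail d)
    {f : D → ℝ} (hanti : ∀ d, f (rev d) = - f d) (R : Finset V) :
    ∑ v ∈ R, netInto head f v
      = ∑ d ∈ univ.filter (fun d => head d ∈ R ∧ tail d ∉ R), f d := by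
  classical
  have htailrev := tail_rev hrev hheadrev
  have h1 : ∑ v ∈ R, netInto head f v = ∑ d ∈ univ.filter (fun d => head d ∈ R), f d := by
    unfold netInto
    exact Finset.sum_fiberwise_eq_sum_filter univ R head f
  rw [h1, ← Finset.sum_filter_add_sum_filter_not (univ.filter fun d => head d ∈ R)
      (fun d => tail d ∈ R) f]
  have h2 : ∑ d ∈ (univ.filter fun d => head d ∈ R).filter (fun d => tail d ∈ R), f d = 0 := by
    refine Finset.sum_involution (fun d _ => rev d) ?_ ?_ ?_ ?_
    · intro a _; rw [hanti]; ring
    · intro a ha hfa h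
      apply hfa
      have h' : rev a = a := h
      have := hanti a
      rw [h'] at this
      linarith
    · intro a ha
      simp only [Finset.mem_filter, Finset.mem_univ, true_and] at ha ⊢
      rw [hheadrev, htailrev]
      exact ⟨ha.2, ha.1⟩
    · intro a _; exact hrev a
  rw [h2, zero_add, Finset.filter_filter]

lemma sum_netInto_univ (hrev : ∀ d, rev (rev d) = d) (hheadrev : ∀ d, head (rev d) = tail d)
    {f : D → ℝ} (hanti : ∀ d, f (rev d) = - f d) :
    ∑ v ∈ (univ : Finset V), netInto head f v = 0 := by
  rw [sum_netInto_eq hrev hheadrev hanti]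
  simp

lemma netInto_source_nonpos (hrev : ∀ d, rev (rev d) = d)
    (hheadrev : ∀ d, head (rev d) = tail d)
    {f : D → ℝ} {s t : V} (hanti : ∀ d, f (rev d) = - f d)
    (hcons : ∀ v, v ≠ s → v ≠ t → netInto head f v = 0)
    (hval : 0 ≤ netInto head f t) : netInto head f s ≤ 0 := by
  have htot := sum_netInto_univ hrev hheadrev hanti (head := head)
  by_cases hst : s = t
  · subst hst
    have : ∑ v ∈ (univ : Finset V), netInto head f v = netInto head f s :=
      Finset.sum_eq_single_of_mem s (Finset.mem_univ s) (fun b _ hb => hcons b hb hb)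
    rw [this] at htot
    exact le_of_eq htot
  · have : ∑ v ∈ (univ : Finset V), netInto head f v = netInto head f s + netInto head f t :=
      Finset.sum_eq_add_of_mem s t (Finset.mem_univ s) (Finset.mem_univ t) hst
        (fun c _ hc => hcons c hc.1 hc.2)
    rw [this] at htot
    linarith

lemma reach_or_sink (hrev : ∀ d, rev (rev d) = d) (hheadrev : ∀ d, head (rev d) = tail d)
    {f : D → ℝ} {s t : V} (hanti : ∀ d, f (rev d) = - f d)
    (hcons : ∀ v, v ≠ s → v ≠ t → netInto head f v = 0)
    (hval : 0 ≤ netInto head f t) {d0 : D} (hd0 : 0 < f d0) :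
    FlowReach head tail f (head d0) (tail d0) ∨ FlowReach head tail f (head d0) t := by
  classical
  by_contra hc
  push_neg at hc
  obtain ⟨h1, h2⟩ := hc
  have htailrev := tail_rev hrev hheadrev
  set R : Finset V := univ.filter (fun v => FlowReach head tail f (head d0) v) with hR
  have hmemR : ∀ v, v ∈ R ↔ FlowReach head tail f (head d0) v := by
    intro v; simp [hR]
  have hsum := sum_netInto_eq hrev hheadrev hanti (tail := tail) R
  -- boundary darts are nonnegative
  have hbd : ∀ d ∈ univ.filter (fun d => head d ∈ R ∧ tail d ∉ R), 0 ≤ f d := by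
    intro d hd
    simp only [Finset.mem_filter, Finset.mem_univ, true_and] at hd
    by_contra hneg
    push_neg at hneg
    have hpos : 0 < f (rev d) := by rw [hanti]; linarith
    have : FlowReach head tail f (head d0) (tail d) :=
      Relation.ReflTransGen.tail ((hmemR _).1 hd.1) ⟨rev d, hpos, htailrev d, hheadrev d⟩
    exact hd.2 ((hmemR _).2 this)
  have hd0mem : d0 ∈ univ.filter (fun d => head d ∈ R ∧ tail d ∉ R) := by
    simp only [Finset.mem_filter, Finset.mem_univ, true_and]
    refine ⟨(hmemR _).2 Relation.ReflTransGen.refl, fun hmem => h1 ((hmemR _).1 hmem)⟩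
  have hlow : f d0 ≤ ∑ d ∈ univ.filter (fun d => head d ∈ R ∧ tail d ∉ R), f d :=
    Finset.single_le_sum hbd hd0mem
  have htnotR : t ∉ R := fun h => h2 ((hmemR _).1 h)
  have hup : ∑ v ∈ R, netInto head f v ≤ 0 := by
    by_cases hs : s ∈ R
    · have : ∑ v ∈ R, netInto head f v = netInto head f s :=
        Finset.sum_eq_single_of_mem s hs
          (fun b hb hbs => hcons b hbs (fun hbt => htnotR (hbt ▸ hb)))
      rw [this]
      exact netInto_source_nonpos hrev hheadrev hanti hcons hval
    · have : ∑ v ∈ R, netInto head f v = 0 :=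
        Finset.sum_eq_zero (fun b hb =>
          hcons b (fun hbs => hs (hbs ▸ hb)) (fun hbt => htnotR (hbt ▸ hb)))
      rw [this]
  rw [hsum] at hup
  linarith

lemma reach_or_source (hrev : ∀ d, rev (rev d) = d) (hheadrev : ∀ d, head (rev d) = tail d)
    {f : D → ℝ} {s t : V} (hanti : ∀ d, f (rev d) = - f d)
    (hcons : ∀ v, v ≠ s → v ≠ t → netInto head f v = 0)
    (hval : 0 ≤ netInto head f t) {d0 : D} (hd0 : 0 < f d0) :
    FlowReach head tail f (head d0) (tail d0) ∨ FlowReach head tail f s (tail d0) := by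
  classical
  by_contra hc
  push_neg at hc
  obtain ⟨h1, h2⟩ := hc
  have htailrev := tail_rev hrev hheadrev
  set R : Finset V := univ.filter (fun v => FlowReach head tail f v (tail d0)) with hR
  have hmemR : ∀ v, v ∈ R ↔ FlowReach head tail f v (tail d0) := by
    intro v; simp [hR]
  have hsum := sum_netInto_eq hrev hheadrev hanti (tail := tail) R
  -- boundary darts are nonpositive
  have hbd : ∀ d ∈ univ.filter (fun d => head d ∈ R ∧ tail d ∉ R), f d ≤ 0 := by
    intro d hd
    simp only [Finset.mem_filter, Finset.mem_univ, true_and] at hd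
    by_contra hneg
    push_neg at hneg
    have : FlowReach head tail f (tail d) (tail d0) :=
      Relation.ReflTransGen.head ⟨d, hneg, rfl, rfl⟩ ((hmemR _).1 hd.1)
    exact hd.2 ((hmemR _).2 this)
  have hd0mem : rev d0 ∈ univ.filter (fun d => head d ∈ R ∧ tail d ∉ R) := by
    simp only [Finset.mem_filter, Finset.mem_univ, true_and]
    rw [hheadrev, htailrev]
    exact ⟨(hmemR _).2 Relation.ReflTransGen.refl, fun hmem => h1 ((hmemR _).1 hmem)⟩
  have hneg0 : f (rev d0) < 0 := by rw [hanti]; linarith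
  have hup : ∑ d ∈ univ.filter (fun d => head d ∈ R ∧ tail d ∉ R), f d < 0 := by
    rw [← Finset.add_sum_erase _ f hd0mem]
    have : ∑ d ∈ (univ.filter (fun d => head d ∈ R ∧ tail d ∉ R)).erase (rev d0), f d ≤ 0 :=
      Finset.sum_nonpos (fun d hd => hbd d (Finset.mem_of_mem_erase hd))
    linarith
  have hsnotR : s ∉ R := fun h => h2 ((hmemR _).1 h)
  have hlow : 0 ≤ ∑ v ∈ R, netInto head f v := by
    by_cases ht : t ∈ R
    · have : ∑ v ∈ R, netInto head f v = netInto head f t :=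
        Finset.sum_eq_single_of_mem t ht
          (fun b hb hbt => hcons b (fun hbs => hsnotR (hbs ▸ hb)) hbt)
      rw [this]; exact hval
    · have : ∑ v ∈ R, netInto head f v = 0 :=
        Finset.sum_eq_zero (fun b hb =>
          hcons b (fun hbs => hsnotR (hbs ▸ hb)) (fun hbt => ht (hbt ▸ hb)))
      rw [this]
  rw [hsum] at hlow
  linarith

/-- Path surgery: a residual path w.r.t. `prev - f` yields a residual path w.r.t. `prev`
with the same endpoints, or residual paths to the sink and from the source. -/
lemma surgery (hrev : ∀ d, rev (rev d) = d) (hheadrev : ∀ d, head (rev d) = tail d)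
    {prev f : D → ℝ} {s t : V}
    (hanti : ∀ d, f (rev d) = - f d) (hle : ∀ d, f d ≤ prev d)
    (hcons : ∀ v, v ≠ s → v ≠ t → netInto head f v = 0)
    (hval : 0 ≤ netInto head f t) :
    ∀ (P : List D) (u v : V), IsPathFrom head tail u v P →
      IsResidual (fun d => prev d - f d) P →
      (∃ W, IsPathFrom head tail u v W ∧ IsResidual prev W) ∨
      ((∃ W, IsPathFrom head tail u t W ∧ IsResidual prev W) ∧
       (∃ W, IsPathFrom head tail s v W ∧ IsResidual prev W)) := by
  have htailrev := tail_rev hrev hheadrev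
  have toW : ∀ a b, FlowReach head tail f a b →
      ∃ W, IsPathFrom head tail a b W ∧ IsResidual prev W := by
    intro a b h
    obtain ⟨p, hp, hpos⟩ := flowReach_walk h
    exact ⟨p, hp, fun e he => lt_of_lt_of_le (hpos e he) (hle e)⟩
  intro P
  induction P with
  | nil =>
      intro u v hp _
      exact Or.inl ⟨[], hp, by intro d hd; simp at hd⟩
  | cons d P ih =>
      intro u v hp hres
      obtain ⟨htd, hp'⟩ := hp
      have hres' : IsResidual (fun e => prev e - f e) P :=
        fun e he => hres e (List.mem_cons_of_mem _ he)
      have hd : 0 < prev d - f d := hres d (List.mem_cons_self)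
      rcases ih (head d) v hp' hres' with ⟨W', hW', hWr⟩ | ⟨⟨W1, hW1, hW1r⟩, hW2⟩
      · by_cases hfd : 0 ≤ f d
        · refine Or.inl ⟨d :: W', ⟨htd, hW'⟩, ?_⟩
          intro e he
          rcases List.mem_cons.1 he with rfl | he
          · linarith
          · exact hWr e he
        · push_neg at hfd
          have hpos : 0 < f (rev d) := by rw [hanti]; linarith
          have hrs := reach_or_sink hrev hheadrev hanti hcons hval hpos
          rw [hheadrev, htailrev, htd] at hrs
          rcases hrs with hby | hsk
          · obtain ⟨Wb, hWb, hWbr⟩ := toW _ _ hby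
            exact Or.inl ⟨Wb ++ W', isPathFrom_append hWb hW', isResidual_append hWbr hWr⟩
          · have hrs2 := reach_or_source hrev hheadrev hanti hcons hval hpos
            rw [hheadrev, htailrev, htd] at hrs2
            rcases hrs2 with hby | hsrc
            · obtain ⟨Wb, hWb, hWbr⟩ := toW _ _ hby
              exact Or.inl ⟨Wb ++ W', isPathFrom_append hWb hW', isResidual_append hWbr hWr⟩
            · obtain ⟨Ws, hWs, hWsr⟩ := toW _ _ hsrc
              exact Or.inr ⟨toW _ _ hsk,
                ⟨Ws ++ W', isPathFrom_append hWs hW', isResidual_append hWsr hWr⟩⟩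
      · refine Or.inr ⟨?_, hW2⟩
        by_cases hfd : 0 ≤ f d
        · refine ⟨d :: W1, ⟨htd, hW1⟩, ?_⟩
          intro e he
          rcases List.mem_cons.1 he with rfl | he
          · linarith
          · exact hW1r e he
        · push_neg at hfd
          have hpos : 0 < f (rev d) := by rw [hanti]; linarith
          have hrs := reach_or_sink hrev hheadrev hanti hcons hval hpos
          rw [hheadrev, htailrev, htd] at hrs
          rcases hrs with hby | hsk
          · obtain ⟨Wb, hWb, hWbr⟩ := toW _ _ hby
            exact ⟨Wb ++ W1, isPathFrom_append hWb hW1, isResidual_append hWbr hW1r⟩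
          · exact toW _ _ hsk

end AuxFlow


section Aug
variable {V D : Type}

/-- real-valued multiplicity of a dart in a walk -/
def cntR [DecidableEq D] (P : List D) (d : D) : ℝ :=
  (P.map (fun e => if e = d then (1:ℝ) else 0)).sum

/-- real-valued number of darts of the walk with head (resp. tail) `w` -/
def inwR [DecidableEq V] (g : D → V) (P : List D) (w : V) : ℝ :=
  (P.map (fun e => if g e = w then (1:ℝ) else 0)).sum

variable [DecidableEq D] [DecidableEq V]

lemma cntR_nonneg (P : List D) (d : D) : 0 ≤ cntR P d := by
  induction P with
  | nil => simp [cntR]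
  | cons a P ih =>
      simp only [cntR, List.map_cons, List.sum_cons] at *
      have : (0:ℝ) ≤ if a = d then (1:ℝ) else 0 := by positivity
      linarith

lemma cntR_le_length (P : List D) (d : D) : cntR P d ≤ P.length := by
  induction P with
  | nil => simp [cntR]
  | cons a P ih =>
      simp only [cntR, List.map_cons, List.sum_cons, List.length_cons] at *
      have : (if a = d then (1:ℝ) else 0) ≤ 1 := by split <;> norm_num
      push_cast
      linarith

lemma cntR_eq_zero_of_not_mem {P : List D} {d : D} (h : d ∉ P) : cntR P d = 0 := by
  induction P with
  | nil => simp [cntR]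
  | cons a P ih =>
      simp only [cntR, List.map_cons, List.sum_cons] at *
      rw [if_neg (by rintro rfl; exact h (List.mem_cons_self)),
        ih (fun hm => h (List.mem_cons_of_mem _ hm)), zero_add]

lemma sum_cntR (S : Finset D) (P : List D) :
    ∑ d ∈ S, cntR P d = (P.map (fun e => if e ∈ S then (1:ℝ) else 0)).sum := by
  induction P with
  | nil => simp [cntR]
  | cons a P ih =>
      simp only [cntR, List.map_cons, List.sum_cons] at *
      rw [Finset.sum_add_distrib, ih, Finset.sum_ite_eq S a (fun _ => (1:ℝ))]

lemma inw_sub_outw {head tail : D → V} (P : List D) :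
    ∀ u v : V, IsPathFrom head tail u v P → ∀ w : V,
      inwR head P w - inwR tail P w
        = (if v = w then (1:ℝ) else 0) - (if u = w then (1:ℝ) else 0) := by
  induction P with
  | nil =>
      intro u v hp w
      have h : u = v := hp
      subst h; simp [inwR]
  | cons d P ih =>
      intro u v hp w
      obtain ⟨htd, hp'⟩ := hp
      have hIH := ih (head d) v hp' w
      simp only [inwR, List.map_cons, List.sum_cons] at *
      rw [htd]
      linarith

variable [Fintype V] [Fintype D]

lemma netInto_shift {head tail : D → V} {rev : D → D}
    (hrev : ∀ d, rev (rev d) = d) (hheadrev : ∀ d, head (rev d) = tail d)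
    (f : D → ℝ) (ε : ℝ) (P : List D) (v : V) :
    netInto head (fun e => f e + ε * (cntR P e - cntR P (rev e))) v
      = netInto head f v + ε * (inwR head P v - inwR tail P v) := by
  have htailrev : ∀ d, tail (rev d) = head d := by
    intro d; conv_rhs => rw [← hrev d, hheadrev]
  unfold netInto
  rw [Finset.sum_add_distrib]
  congr 1
  rw [← Finset.mul_sum, Finset.sum_sub_distrib]
  congr 2
  · rw [sum_cntR]
    unfold inwR
    congr 1
    apply List.map_congr_left
    intro e _
    simp
  · have himg : univ.filter (fun d => tail d = v)
        = (univ.filter (fun d => head d = v)).image rev := by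
      ext e
      simp only [Finset.mem_filter, Finset.mem_univ, true_and, Finset.mem_image]
      constructor
      · intro h; exact ⟨rev e, by rw [hheadrev]; exact h, hrev e⟩
      · rintro ⟨a, ha, rfl⟩; rw [htailrev]; exact ha
    rw [show (∑ d ∈ univ.filter (fun d => head d = v), cntR P (rev d))
        = ∑ d ∈ (univ.filter (fun d => head d = v)).image rev, cntR P d from
      (Finset.sum_image (fun x _ y _ h => by rw [← hrev x, h, hrev])).symm,
      ← himg, sum_cntR]
    unfold inwR
    congr 1
    apply List.map_congr_left
    intro e _
    simp

lemma no_aug {head tail : D → V} {rev : D → D}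
    (hrev : ∀ d, rev (rev d) = d) (hheadrev : ∀ d, head (rev d) = tail d)
    {c f : D → ℝ} {s t : V} (hflow : IsFlow head tail rev c f s t)
    (hmax : ∀ f', IsFlow head tail rev c f' s t → flowValue head f' t ≤ flowValue head f t)
    (hst : s ≠ t) {P : List D} (hP : IsPathFrom head tail s t P)
    (hres : IsResidual (fun d => c d - f d) P) : False := by
  classical
  obtain ⟨hanti, hle, hcons⟩ := hflow
  have hPne : P ≠ [] := by
    intro h
    subst h
    exact hst hP
  have hlenpos : 0 < (P.length : ℝ) := by
    have := List.length_pos_iff.2 hPne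
    exact_mod_cast this
  -- minimum residual capacity along P
  have hSne : (P.toFinset.image (fun d => c d - f d)).Nonempty := by
    refine Finset.image_nonempty.2 ?_
    rw [List.toFinset_nonempty_iff]
    exact hPne
  set δ := (P.toFinset.image (fun d => c d - f d)).min' hSne with hδ
  have hδpos : 0 < δ := by
    obtain ⟨d, hd, hdeq⟩ := Finset.mem_image.1 ((P.toFinset.image (fun d => c d - f d)).min'_mem hSne)
    rw [hδ, ← hdeq]
    exact hres d (List.mem_toFinset.1 hd)
  have hδle : ∀ d ∈ P, δ ≤ c d - f d := by
    intro d hd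
    exact Finset.min'_le _ _ (Finset.mem_image_of_mem _ (List.mem_toFinset.2 hd))
  set ε := δ / P.length with hε
  have hεpos : 0 < ε := div_pos hδpos hlenpos
  have hεlen : ε * P.length = δ := by
    rw [hε]; field_simp
  set f' := fun e => f e + ε * (cntR P e - cntR P (rev e)) with hf'
  have hanti' : ∀ d, f' (rev d) = - f' d := by
    intro d
    simp only [hf', hanti, hrev]
    ring
  have hle' : ∀ d, f' d ≤ c d := by
    intro d
    by_cases hmem : d ∈ P
    · have h1 : cntR P d ≤ P.length := cntR_le_length P d
      have h2 : 0 ≤ cntR P (rev d) := cntR_nonneg P (rev d)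
      have h3 : ε * cntR P d ≤ ε * P.length := by
        apply mul_le_mul_of_nonneg_left h1 (le_of_lt hεpos)
      have h4 := hδle d hmem
      have : f' d ≤ f d + ε * cntR P d := by
        simp only [hf']
        nlinarith
      nlinarith
    · have h1 : cntR P d = 0 := cntR_eq_zero_of_not_mem hmem
      have h2 : 0 ≤ cntR P (rev d) := cntR_nonneg P (rev d)
      have : f' d ≤ f d := by
        simp only [hf', h1]
        nlinarith
      linarith [hle d]
  have hcons' : ∀ v, v ≠ s → v ≠ t → netInto head f' v = 0 := by
    intro v hvs hvt
    rw [hf', netInto_shift hrev hheadrev, hcons v hvs hvt,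
      inw_sub_outw P s t hP v, if_neg (fun h => hvt h.symm), if_neg (fun h => hvs h.symm)]
    ring
  have hval' : netInto head f' t = netInto head f t + ε := by
    rw [hf', netInto_shift hrev hheadrev, inw_sub_outw P s t hP t, if_pos rfl,
      if_neg hst]
    ring
  have := hmax f' ⟨hanti', hle', hcons'⟩
  unfold flowValue at this
  rw [hval'] at this
  linarith
end Aug


/-- **Invariant 3 (no back flow).** In AbstractFlow there is no residual
`s i`-to-`t j` path with `i > j`, neither w.r.t. the preprocessed capacities `c0`
nor w.r.t. any residual capacities `cap k l` with `k ≤ l` arising during the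
algorithm.  (Invariant 2 may be assumed.) -/
theorem abstractflow_no_back_flow
    [Fintype V] [Fintype D] [DecidableEq V] [DecidableEq D]
    (head tail : D → V) (rev : D → D) (IsClockwiseCycle : List D → Prop)
    (hrev : ∀ d, rev (rev d) = d)
    (hheadrev : ∀ d, head (rev d) = tail d)
    (m : ℕ) (s t : ℕ → V) (c0 : D → ℝ) (hc0 : ∀ d, 0 ≤ c0 d)
    (prev cap fl : ℕ → ℕ → D → ℝ)
    (hrun : AbstractFlowRun head tail rev IsClockwiseCycle m s t c0 prev cap fl)
    -- Invariant 2 may be assumed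
    (hinv2 : ∀ i k j, 1 ≤ i → i ≤ k → k ≤ m → i < j → j ≤ m →
      ∀ p, IsPathFrom head tail (s j) (t k) p → ¬ IsResidual (cap i k) p) :
    (∀ i j, 1 ≤ j → j < i → i ≤ m →
      ∀ p, IsPathFrom head tail (s i) (t j) p → ¬ IsResidual c0 p) ∧
    (∀ k l, 1 ≤ k → k ≤ l → l ≤ m → ∀ i j, 1 ≤ j → j < i → i ≤ m →
      ∀ p, IsPathFrom head tail (s i) (t j) p → ¬ IsResidual (cap k l) p) := by
  classical
  obtain ⟨hpre, hcyc, hp11, hpdiag, hpstep, hiter⟩ := hrun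
  set Q : (D → ℝ) → Prop := fun c => ∀ i j, 1 ≤ j → j < i → i ≤ m →
    ∀ p, IsPathFrom head tail (s i) (t j) p → ¬ IsResidual c p with hQdef
  set NN : (D → ℝ) → Prop := fun c => ∀ d, 0 ≤ c d with hNNdef
  have hQ0 : Q c0 := fun i j hj hji him p hp hres => hpre j i hj hji him p hp hres
  have key : ∀ N k l, 1 ≤ k → k ≤ l → l ≤ m → l * (m + 1) + (l - k) ≤ N →
      NN (cap k l) ∧ Q (cap k l) := by
    intro N
    induction N with
    | zero =>
        intro k l hk hkl hlm hN
        exfalso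
        have h1 : 1 ≤ l * (m + 1) := Nat.mul_pos (by omega) (by omega)
        omega
    | succ N ih =>
        intro k l hk hkl hlm hN
        have hprev : NN (prev k l) ∧ Q (prev k l) := by
          rcases eq_or_lt_of_le hkl with heq | hlt
          · subst heq
            rcases eq_or_lt_of_le hk with h1 | h1
            · rw [← h1, hp11]
              exact ⟨hc0, hQ0⟩
            · rw [hpdiag k h1 hlm]
              refine ih 1 (k - 1) le_rfl (by omega) (by omega) ?_
              have e1 : (k - 1) * (m + 1) + (m + 1) = k * (m + 1) := by
                have e2 : (k - 1) + 1 = k := by omega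
                calc (k - 1) * (m + 1) + (m + 1) = ((k - 1) + 1) * (m + 1) := by ring
                  _ = k * (m + 1) := by rw [e2]
              have h2 : k - 1 - 1 + 1 ≤ m + 1 := by omega
              set A := (k - 1) * (m + 1) with hA
              set B := k * (m + 1) with hB
              omega
          · rw [hpstep k l hk hlt hlm]
            refine ih (k + 1) l (by omega) hlt hlm ?_
            set A := l * (m + 1) with hA
            omega
        obtain ⟨hNNp, hQp⟩ := hprev
        obtain ⟨hlmf, hcap⟩ := hiter k l hk hkl hlm
        obtain ⟨hflow, hmax, _⟩ := hlmf
        obtain ⟨hanti, hle, hcons⟩ := hflow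
        have hNNc : NN (cap k l) := by
          intro d
          rw [hcap d]
          linarith [hle d]
        have hval : 0 ≤ netInto head (fl k l) (t l) := by
          have hzero : IsFlow head tail rev (prev k l) 0 (s k) (t l) :=
            ⟨by simp, fun d => hNNp d, fun v _ _ => by simp [netInto]⟩
          have h := hmax 0 hzero
          unfold flowValue netInto at h
          simpa [netInto] using h
        have hQc : Q (cap k l) := by
          intro i j hj hji him p hp hres
          have hres' : IsResidual (fun d => prev k l d - fl k l d) p := by
            intro e he
            have h := hres e he
            rwa [hcap e] at h
          rcases surgery hrev hheadrev hanti hle hcons hval p _ _ hp hres' with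
            ⟨W, hW, hWr⟩ | ⟨⟨W1, hW1, hW1r⟩, ⟨W2, hW2, hW2r⟩⟩
          · exact hQp i j hj hji him W hW hWr
          · by_cases hjk : j < k
            · exact hQp k j hj hjk (le_trans hkl hlm) W2 hW2 hW2r
            · push_neg at hjk
              by_cases hil : l < i
              · exact hQp i l (le_trans hk hkl) hil him W1 hW1 hW1r
              · push_neg at hil
                have hkl2 : k < l := lt_of_lt_of_le (lt_of_le_of_lt hjk hji) hil
                have hprevEq : prev k l = cap (k + 1) l := hpstep k l hk hkl2 hlm
                have hik1 : k + 1 ≤ i := by omega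
                rcases eq_or_lt_of_le hik1 with hik | hik
                · -- i = k + 1 : contradiction with maximality at iteration (k+1, l)
                  obtain ⟨hlmf2, hcap2⟩ := hiter (k + 1) l (by omega) (by omega) hlm
                  obtain ⟨hflow2, hmax2, _⟩ := hlmf2
                  have hst : s (k + 1) ≠ t l := by
                    intro h
                    exact hinv2 k l (k + 1) hk hkl hlm (by omega) (by omega) [] h
                      (by intro d hd; simp at hd)
                  have hW1' : IsPathFrom head tail (s (k + 1)) (t l) W1 := by
                    rwa [← hik] at hW1
                  have hW1r' : IsResidual (fun d => prev (k + 1) l d - fl (k + 1) l d) W1 := by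
                    intro e he
                    have h := hW1r e he
                    rw [hprevEq] at h
                    rwa [hcap2 e] at h
                  exact no_aug hrev hheadrev hflow2 hmax2 hst hW1' hW1r'
                · -- k + 1 < i : contradiction with Invariant 2
                  have hW1r' : IsResidual (cap (k + 1) l) W1 := by
                    rwa [hprevEq] at hW1r
                  exact hinv2 (k + 1) l i (by omega) (by omega) hlm hik him W1 hW1 hW1r'
        exact ⟨hNNc, hQc⟩
  refine ⟨hQ0, ?_⟩
  intro k l hk hkl hlm
  exact (key (l * (m + 1) + (l - k)) k l hk hkl hlm le_rfl).2
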